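/- arXiv:2207.05396 — 2 statements merged into one kernel-verified Lean document; each statement's English description precedes it below -/
import Mathlib

section
/- Let B ⊆ {2,3,…} be primitive, let (S_i)_{i≥1} be a saturated filtration of B by finite nonempty subsets, and assume η is a Toeplitz sequence. Then (lcm(S_i))_{i≥1} is a periodic structure of η: lcm(S_i) divides lcm(S_{i+1}) for every i, ⋃_{i≥1} Per(η, lcm(S_i)) = ℤ, and each lcm(S_i) is an essential period of η, meaning that Per(η, lcm(S_i)) ≠ ∅ and for every s ≥ 1, Per(η, lcm(S_i)) ⊆ Per(η, s) implies lcm(S_i) ∣ s. -/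
namespace BFreeZ

/-- The set of multiples `M_B = ⋃_{b ∈ B} bℤ` of `B ⊆ ℕ`. -/
def MBZ (B : Set ℕ) : Set ℤ := {n : ℤ | ∃ b ∈ B, (b : ℤ) ∣ n}

open Classical in
/-- The indicator function `η` of the `B`-free integers. -/
noncomputable def etaZ (B : Set ℕ) : ℤ → Bool :=
  fun n => if n ∈ MBZ B then false else true

/-- `Per(x, s) = {n ∈ ℤ : x(n + ks) = x(n) for all k ∈ ℤ}`. -/
def PerZ {A : Type*} (x : ℤ → A) (s : ℕ) : Set ℤ :=
  {n : ℤ | ∀ k : ℤ, x (n + k * s) = x n}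

/-- `x` is a Toeplitz sequence. -/
def IsToeplitzZ {A : Type*} (x : ℤ → A) : Prop :=
  ∀ n : ℤ, ∃ s : ℕ, 0 < s ∧ n ∈ PerZ x s

/-- `B ⊆ ℕ` is primitive: no element divides another one. -/
def PrimitiveZ (B : Set ℕ) : Prop :=
  ∀ b ∈ B, ∀ b' ∈ B, b ≠ b' → ¬ b ∣ b'

/-- The set `D` of `d ∈ ℕ` such that `d·C ⊆ B` for some infinite pairwise coprime set `C`
of integers greater than `1`. -/
def DZ (B : Set ℕ) : Set ℕ :=
  {d : ℕ | 0 < d ∧ ∃ C : Set ℕ, C.Infinite ∧ (∀ c ∈ C, 1 < c) ∧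
    (∀ c ∈ C, ∀ c' ∈ C, c ≠ c' → Nat.Coprime c c') ∧ ∀ c ∈ C, d * c ∈ B}

end BFreeZ

namespace BFreeZ

lemma etaZ_eq_false {B : Set ℕ} {n : ℤ} (h : n ∈ MBZ B) : etaZ B n = false := by
  simp [etaZ, h]

lemma etaZ_eq_true {B : Set ℕ} {n : ℤ} (h : n ∉ MBZ B) : etaZ B n = true := by
  simp [etaZ, h]

lemma not_mem_MBZ_of_etaZ_true {B : Set ℕ} {n : ℤ} (h : etaZ B n = true) : n ∉ MBZ B := by
  intro hn
  rw [etaZ_eq_false hn] at h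
  exact Bool.false_ne_true h

lemma chain_subset (S : ℕ → Finset ℕ) (hmono : ∀ i, S i ⊆ S (i + 1)) :
    ∀ i j, i ≤ j → S i ⊆ S j := by
  intro i j hij
  induction hij with
  | refl => exact fun _ h => h
  | step h ih => exact fun x hx => hmono _ (ih hx)

lemma sl_pos (S : ℕ → Finset ℕ) (B : Set ℕ) (hB2 : ∀ b ∈ B, 2 ≤ b)
    (hsub : ∀ i, (S i : Set ℕ) ⊆ B) (i : ℕ) : 0 < (S i).lcm id := by
  rcases Nat.eq_zero_or_pos ((S i).lcm id) with h | h
  · exfalso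
    rw [Finset.lcm_eq_zero_iff] at h
    obtain ⟨x, hx, hx0⟩ := h
    have := hB2 x (hsub i hx)
    simp only [id_eq] at hx0
    omega
  · exact h

lemma sl_dvd_sl (S : ℕ → Finset ℕ) (hmono : ∀ i, S i ⊆ S (i + 1)) {i j : ℕ} (hij : i ≤ j) :
    (S i).lcm id ∣ (S j).lcm id := by
  apply Finset.lcm_dvd
  intro x hx
  exact Finset.dvd_lcm (chain_subset S hmono i j hij hx)

/-- The key covering lemma: if `n` is `B`-free and lies in a `B`-free arithmetic
progression of some period `s > 0`, then for some `i` the whole progression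
`n + lcm(Sᵢ)ℤ` is `B`-free. -/
lemma key_lemma (B : Set ℕ) (hB2 : ∀ b ∈ B, 2 ≤ b)
    (S : ℕ → Finset ℕ)
    (hne : ∀ i, (S i).Nonempty) (hsub : ∀ i, (S i : Set ℕ) ⊆ B)
    (hmono : ∀ i, S i ⊆ S (i + 1)) (hunion : (⋃ i, (S i : Set ℕ)) = B)
    (n : ℤ) (hn : n ∉ MBZ B) (s : ℕ) (hs0 : 0 < s)
    (hsper : ∀ k : ℤ, n + k * (s : ℤ) ∉ MBZ B) :
    ∃ i, ∀ k : ℤ, n + k * (((S i).lcm id : ℕ) : ℤ) ∉ MBZ B := by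
  by_contra hcon
  push_neg at hcon
  -- extract witnesses
  choose k hk using hcon
  choose b hbB hbd using hk
  set sl : ℕ → ℕ := fun i => (S i).lcm id with hsl
  have hslpos : ∀ i, 0 < sl i := fun i => sl_pos S B hB2 hsub i
  -- n ≠ 0
  have hn0 : n ≠ 0 := by
    intro h
    obtain ⟨b0, hb0⟩ := hne 0
    exact hn ⟨b0, hsub 0 hb0, h ▸ dvd_zero _⟩
  -- each gcd divides n
  have hdn : ∀ i, ((Nat.gcd (b i) (sl i) : ℤ)) ∣ n := by
    intro i
    have h1 : ((Nat.gcd (b i) (sl i) : ℤ)) ∣ n + k i * (sl i : ℤ) :=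
      dvd_trans (Int.natCast_dvd_natCast.mpr (Nat.gcd_dvd_left _ _)) (hbd i)
    have h2 : ((Nat.gcd (b i) (sl i) : ℤ)) ∣ k i * (sl i : ℤ) :=
      Dvd.dvd.mul_left (Int.natCast_dvd_natCast.mpr (Nat.gcd_dvd_right _ _)) _
    have := dvd_sub h1 h2
    simpa using this
  have hble : ∀ i, Nat.gcd (b i) (sl i) ≤ n.natAbs := by
    intro i
    apply Nat.le_of_dvd (Int.natAbs_pos.mpr hn0)
    exact Int.natCast_dvd_natCast.mp (Int.dvd_natAbs.mpr (hdn i))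
  -- pigeonhole: some gcd value occurs infinitely often
  have hpig : ∃ d, {i : ℕ | Nat.gcd (b i) (sl i) = d}.Infinite := by
    by_contra hfin
    push_neg at hfin
    have hcover : (Set.univ : Set ℕ) ⊆
        ⋃ d ∈ Finset.range (n.natAbs + 1), {i : ℕ | Nat.gcd (b i) (sl i) = d} := by
      intro i _
      simp only [Set.mem_iUnion]
      exact ⟨Nat.gcd (b i) (sl i), Finset.mem_range.mpr (Nat.lt_succ_of_le (hble i)), rfl⟩
    exact Set.infinite_univ (Set.Finite.subset
      (Set.Finite.biUnion (Finset.range (n.natAbs + 1)).finite_toSet (fun d _ => hfin d)) hcover)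
  obtain ⟨d, hI⟩ := hpig
  set I : Set ℕ := {i : ℕ | Nat.gcd (b i) (sl i) = d} with hIdef
  obtain ⟨i0, hi0⟩ := hI.nonempty
  have hddn : (d : ℤ) ∣ n := hi0 ▸ hdn i0
  have hdpos : 0 < d := by
    have h1 : 0 < Nat.gcd (b i0) (sl i0) := Nat.gcd_pos_of_pos_right _ (hslpos i0)
    have h2 : Nat.gcd (b i0) (sl i0) = d := hi0
    omega
  have hdnB : d ∉ B := fun hd => hn ⟨d, hd, hddn⟩
  -- step function for the chain
  have hstep : ∀ x : ℕ, ∃ y, y ∈ I ∧ x < y ∧ b x ∣ sl y := by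
    intro x
    have hbx : b x ∈ ⋃ i, (S i : Set ℕ) := hunion ▸ hbB x
    obtain ⟨j, hj⟩ := Set.mem_iUnion.mp hbx
    obtain ⟨y, hyI, hy⟩ := hI.exists_gt (max x j)
    refine ⟨y, hyI, lt_of_le_of_lt (le_max_left _ _) hy, ?_⟩
    exact Finset.dvd_lcm (chain_subset S hmono j y (le_of_lt (lt_of_le_of_lt (le_max_right _ _) hy)) hj)
  choose F hFI hFlt hFdvd using hstep
  set g : ℕ → ℕ := fun m => F^[m + 1] i0 with hgdef
  have hgsucc : ∀ m, g (m + 1) = F (g m) := by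
    intro m
    simp only [hgdef]
    rw [Function.iterate_succ_apply']
  have hgI : ∀ m, g m ∈ I := by
    intro m
    induction m with
    | zero => exact hFI i0
    | succ m ih => rw [hgsucc]; exact hFI _
  have hgmono : StrictMono g := by
    apply strictMono_nat_of_lt_succ
    intro m
    rw [hgsucc]
    exact hFlt (g m)
  have hgdvd : ∀ m m', m < m' → b (g m) ∣ sl (g m') := by
    intro m m' hmm'
    have h1 : b (g m) ∣ sl (g (m + 1)) := by rw [hgsucc]; exact hFdvd (g m)
    exact dvd_trans h1 (sl_dvd_sl S hmono (hgmono.le_iff_le.mpr hmm'))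
  -- the coprime family
  have hgcdd : ∀ m, Nat.gcd (b (g m)) (sl (g m)) = d := fun m => hgI m
  have hdvd_bgm : ∀ m, d ∣ b (g m) := fun m => (hgcdd m) ▸ Nat.gcd_dvd_left _ _
  set c : ℕ → ℕ := fun m => b (g m) / d with hcdef
  have hdc : ∀ m, d * c m = b (g m) := fun m => Nat.mul_div_cancel' (hdvd_bgm m) 
  have hcop : ∀ m m', m < m' → Nat.Coprime (c m) (c m') := by
    intro m m' hmm'
    have h1 : d * Nat.gcd (c m) (c m') ∣ sl (g m') :=
      dvd_trans (by exact Nat.mul_dvd_mul_left d (Nat.gcd_dvd_left _ _)) ((hdc m) ▸ hgdvd m m' hmm')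
    have h2 : d * Nat.gcd (c m) (c m') ∣ b (g m') :=
      dvd_trans (Nat.mul_dvd_mul_left d (Nat.gcd_dvd_right _ _)) ((hdc m') ▸ dvd_refl _)
    have h3 : d * Nat.gcd (c m) (c m') ∣ Nat.gcd (b (g m')) (sl (g m')) := Nat.dvd_gcd h2 h1
    rw [hgcdd m'] at h3
    have h4 : d * Nat.gcd (c m) (c m') ∣ d * 1 := by simpa using h3
    have h5 : Nat.gcd (c m) (c m') ∣ 1 := (Nat.mul_dvd_mul_iff_left hdpos).mp h4
    exact Nat.dvd_one.mp h5
  have hc1 : ∀ m, 1 < c m := by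
    intro m
    have hb2 : 2 ≤ b (g m) := hB2 _ (hbB _)
    have := hdc m
    rcases Nat.lt_or_ge (c m) 2 with h | h
    · interval_cases hcm : (c m)
      · omega
      · exfalso; apply hdnB; rw [show d = b (g m) by omega]; exact hbB _
    · omega
  -- find m with c m coprime to s
  have hexm : ∃ m, Nat.Coprime (c m) s := by
    by_contra hno
    push_neg at hno
    have hlt : ∀ m, Nat.gcd (c m) s < s + 1 :=
      fun m => Nat.lt_succ_of_le (Nat.le_of_dvd hs0 (Nat.gcd_dvd_right _ _))
    obtain ⟨m, m', hmm', he⟩ :=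
      Finite.exists_ne_map_eq_of_infinite (fun m : ℕ => (⟨Nat.gcd (c m) s, hlt m⟩ : Fin (s + 1)))
    have he' : Nat.gcd (c m) s = Nat.gcd (c m') s := by
      simpa using congrArg Fin.val he
    have ht1 : Nat.gcd (c m) s ∣ c m := Nat.gcd_dvd_left _ _
    have ht2 : Nat.gcd (c m) s ∣ c m' := he' ▸ Nat.gcd_dvd_left _ _
    have hcop' : Nat.Coprime (c m) (c m') := by
      rcases Nat.lt_or_ge m m' with h | h
      · exact hcop m m' h
      · exact (hcop m' m (lt_of_le_of_ne h (Ne.symm hmm'))).symm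
    have : Nat.gcd (c m) s ∣ 1 := hcop' ▸ Nat.dvd_gcd ht1 ht2
    exact hno m (Nat.dvd_one.mp this)
  obtain ⟨m, hm⟩ := hexm
  -- the bad divisor
  set bb : ℕ := b (g m) with hbbdef
  have hbbB : bb ∈ B := hbB _
  set G : ℕ := Nat.gcd bb s with hGdef
  have hGd : G ∣ d := by
    have h1 : Nat.Coprime (c m) G := Nat.Coprime.coprime_dvd_right (Nat.gcd_dvd_right _ _) hm
    have h2 : G ∣ d * c m := (hdc m) ▸ Nat.gcd_dvd_left _ _
    rw [mul_comm] at h2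
    exact (Nat.Coprime.dvd_of_dvd_mul_left h1.symm h2)
  have hGn : (G : ℤ) ∣ n := dvd_trans (Int.natCast_dvd_natCast.mpr hGd) hddn
  obtain ⟨w, hw⟩ := hGn
  -- Bézout and the contradiction
  have hbez : (G : ℤ) = (bb : ℤ) * Nat.gcdA bb s + (s : ℤ) * Nat.gcdB bb s :=
    Nat.gcd_eq_gcd_ab bb s
  apply hsper (-(Nat.gcdB bb s * w))
  refine ⟨bb, hbbB, ⟨Nat.gcdA bb s * w, ?_⟩⟩
  rw [hw, hbez]
  ring

/-- **Theorem.** If `η` is a Toeplitz sequence, then `(lcm(Sᵢ))ᵢ` is a periodic structure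
of `η`. -/
theorem periodic_structure_one_dim
    (B : Set ℕ) (hB2 : ∀ b ∈ B, 2 ≤ b) (hprim : PrimitiveZ B)
    (S : ℕ → Finset ℕ)
    (hne : ∀ i, (S i).Nonempty) (hsub : ∀ i, (S i : Set ℕ) ⊆ B)
    (hmono : ∀ i, S i ⊆ S (i + 1)) (hunion : (⋃ i, (S i : Set ℕ)) = B)
    (hsat : ∀ i, {n : ℕ | ∃ b ∈ B, n = Nat.gcd b ((S i).lcm id)} ∩ B = (S i : Set ℕ))
    (htoe : IsToeplitzZ (etaZ B)) :
    (∀ i, (S i).lcm id ∣ (S (i + 1)).lcm id) ∧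
    (⋃ i, PerZ (etaZ B) ((S i).lcm id)) = Set.univ ∧
    (∀ i, (PerZ (etaZ B) ((S i).lcm id)).Nonempty ∧
      ∀ s : ℕ, 0 < s → PerZ (etaZ B) ((S i).lcm id) ⊆ PerZ (etaZ B) s →
        (S i).lcm id ∣ s) := by
  refine ⟨?_, ?_, ?_⟩
  · -- divisibility of the lcm's
    intro i
    exact sl_dvd_sl S hmono (Nat.le_succ i)
  · -- the union of the periods is everything
    apply Set.eq_univ_iff_forall.mpr
    intro n
    rcases Classical.em (n ∈ MBZ B) with hmem | hmem
    · obtain ⟨bb, hbbB, hbbd⟩ := hmem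
      have hbb : bb ∈ ⋃ i, (S i : Set ℕ) := hunion ▸ hbbB
      obtain ⟨i, hi⟩ := Set.mem_iUnion.mp hbb
      refine Set.mem_iUnion.mpr ⟨i, ?_⟩
      intro k
      have h1 : n + k * (((S i).lcm id : ℕ) : ℤ) ∈ MBZ B := by
        refine ⟨bb, hbbB, dvd_add hbbd ?_⟩
        exact Dvd.dvd.mul_left (Int.natCast_dvd_natCast.mpr (Finset.dvd_lcm hi)) _
      rw [etaZ_eq_false h1, etaZ_eq_false ⟨bb, hbbB, hbbd⟩]
    · obtain ⟨s, hs0, hsper⟩ := htoe n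
      have hsfree : ∀ k : ℤ, n + k * (s : ℤ) ∉ MBZ B := by
        intro k hk
        have := hsper k
        rw [etaZ_eq_false hk, etaZ_eq_true hmem] at this
        exact Bool.false_ne_true this
      obtain ⟨i, hi⟩ := key_lemma B hB2 S hne hsub hmono hunion n hmem s hs0 hsfree
      refine Set.mem_iUnion.mpr ⟨i, ?_⟩
      intro k
      rw [etaZ_eq_true (hi k), etaZ_eq_true hmem]
  · -- each lcm is an essential period
    intro i
    constructor
    · -- Per is nonempty: 0 belongs to it
      obtain ⟨b0, hb0⟩ := hne i
      have hb0B : b0 ∈ B := hsub i hb0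
      refine ⟨0, ?_⟩
      intro k
      have h1 : (0 : ℤ) + k * (((S i).lcm id : ℕ) : ℤ) ∈ MBZ B := by
        refine ⟨b0, hb0B, ?_⟩
        rw [zero_add]
        exact Dvd.dvd.mul_left (Int.natCast_dvd_natCast.mpr (Finset.dvd_lcm hb0)) _
      rw [etaZ_eq_false h1, etaZ_eq_false ⟨b0, hb0B, dvd_zero _⟩]
    · -- essentiality
      intro s hs0 hsubper
      apply Finset.lcm_dvd
      intro bb hbb
      have hbbB : bb ∈ B := hsub i hbb
      have hbbdl : (bb : ℤ) ∣ (((S i).lcm id : ℕ) : ℤ) := Int.natCast_dvd_natCast.mpr (Finset.dvd_lcm hbb)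
      -- every multiple of bb is in Per(η, lcm Sᵢ)
      have hmult : ∀ z : ℤ, (bb : ℤ) ∣ z → z ∈ PerZ (etaZ B) ((S i).lcm id) := by
        intro z hz k
        have h1 : z + k * (((S i).lcm id : ℕ) : ℤ) ∈ MBZ B :=
          ⟨bb, hbbB, dvd_add hz (Dvd.dvd.mul_left hbbdl _)⟩
        rw [etaZ_eq_false h1, etaZ_eq_false ⟨bb, hbbB, hz⟩]
      -- Bézout: gcd bb s is hit by the progression
      set G : ℕ := Nat.gcd bb s with hGdef
      have hbez : (G : ℤ) = (bb : ℤ) * Nat.gcdA bb s + (s : ℤ) * Nat.gcdB bb s :=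
        Nat.gcd_eq_gcd_ab bb s
      have hbase : ((bb : ℤ) * Nat.gcdA bb s) ∈ PerZ (etaZ B) s :=
        hsubper (hmult _ (Dvd.intro _ rfl))
      have hGfalse : etaZ B (G : ℤ) = false := by
        have := hbase (Nat.gcdB bb s)
        have he : ((bb : ℤ) * Nat.gcdA bb s) + (Nat.gcdB bb s) * (s : ℤ) = (G : ℤ) := by
          rw [hbez]; ring
        rw [he] at this
        rw [this]
        exact etaZ_eq_false ⟨bb, hbbB, Dvd.intro _ rfl⟩
      -- so G ∈ M_B, hence some b' ∈ B divides G
      have hGmem : (G : ℤ) ∈ MBZ B := by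
        by_contra hc
        rw [etaZ_eq_true hc] at hGfalse
        simp at hGfalse
      obtain ⟨b', hb'B, hb'd⟩ := hGmem
      have hb'G : b' ∣ G := Int.natCast_dvd_natCast.mp hb'd
      have hb'bb : b' ∣ bb := dvd_trans hb'G (Nat.gcd_dvd_left _ _)
      have hbeq : b' = bb := by
        by_contra hne'
        exact hprim b' hb'B bb hbbB hne' hb'bb
      rw [← hbeq]
      exact dvd_trans hb'G (Nat.gcd_dvd_right _ _)

end BFreeZ
end

section
/- Let G be a countably infinite abelian group acting on a compact metric space X by homeomorphisms (T_g)_{g∈G} (with T_g ∘ T_h = T_{g+h}), and let x₀ ∈ X be a point with dense orbit. The following are equivalent: (a) X has exactly one minimal subset; (b) there exists a nonempty closed invariant set M' ⊆ X such that for every x ∈ M' and every y ∈ X there is a sequence (g_n) in G with g_n → ∞ and T_{g_n} y → x; (c) there exists x_M ∈ X such that for every y ∈ X there is a sequence (g_n) in G with g_n → ∞ and T_{g_n} y → x_M; (d) there exists a nonempty closed invariant set M'' ⊆ X such that for every open U ⊆ X with U ∩ M'' ≠ ∅ the set {g ∈ G : T_g x₀ ∈ U} is syndetic; (e) there exists a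 sequence (U_n)_{n≥1} of nonempty open subsets of X with diam(U_n) → 0 such that {g ∈ G : T_g x₀ ∈ U_n} is syndetic for every n. -/
open Filter Topology

/-- A set `M` is invariant under the action `T`. -/
def ActInvariant {G X : Type*} (T : G → X → X) (M : Set X) : Prop :=
  ∀ g : G, ∀ x ∈ M, T g x ∈ M

/-- A minimal subset: nonempty, closed, invariant, with no proper nonempty closed
invariant subset. -/
def ActMinimal {G X : Type*} [TopologicalSpace X] (T : G → X → X) (M : Set X) : Prop :=
  M.Nonempty ∧ IsClosed M ∧ ActInvariant T M ∧
    ∀ N ⊆ M, N.Nonempty → IsClosed N → ActInvariant T N → N = M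

/-- `g n → ∞`: the sequence eventually leaves every finite subset of `G`. -/
def TendstoInftyGrp {G : Type*} (g : ℕ → G) : Prop :=
  ∀ A : Set G, A.Finite → ∃ N : ℕ, ∀ n ≥ N, g n ∉ A

/-- `R ⊆ G` is syndetic: `R + F = G` for some finite `F ⊆ G`. -/
def SyndeticSet {G : Type*} [AddCommGroup G] (R : Set G) : Prop :=
  ∃ F : Set G, F.Finite ∧ ∀ g : G, ∃ r ∈ R, ∃ f ∈ F, g = r + f

set_option linter.unusedSectionVars false
set_option linter.unusedVariables false

section Helpers

variable {G X : Type*} [AddCommGroup G] {T : G → X → X}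

lemma tfae_tAdd (hcomp : ∀ g h : G, T g ∘ T h = T (g + h)) (g h : G) (x : X) :
    T g (T h x) = T (g + h) x := congrFun (hcomp g h) x

lemma tfae_tZero (hbij : ∀ g : G, Function.Bijective (T g))
    (hcomp : ∀ g h : G, T g ∘ T h = T (g + h)) (x : X) : T 0 x = x :=
  (hbij 0).1 (by rw [tfae_tAdd hcomp, zero_add])

lemma tfae_tNeg (hbij : ∀ g : G, Function.Bijective (T g))
    (hcomp : ∀ g h : G, T g ∘ T h = T (g + h)) (f : G) : T (-f) ∘ T f = id := by
  rw [hcomp, neg_add_cancel]; exact funext (tfae_tZero hbij hcomp)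

variable [TopologicalSpace X]

lemma tfae_closure_inv (hcont : ∀ g : G, Continuous (T g))
    {S : Set X} (hS : ActInvariant T S) : ActInvariant T (closure S) := by
  intro g x hx
  have h1 : T g '' closure S ⊆ closure (T g '' S) :=
    image_closure_subset_closure_image (hcont g)
  have h2 : T g '' S ⊆ S := by rintro _ ⟨w, hw, rfl⟩; exact hS g w hw
  exact closure_mono h2 (h1 ⟨x, hx, rfl⟩)

lemma tfae_orbit_inv (hcomp : ∀ g h : G, T g ∘ T h = T (g + h)) (x : X) :
    ActInvariant T (Set.range fun g : G => T g x) := by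
  rintro h _ ⟨g, rfl⟩; exact ⟨h + g, (tfae_tAdd hcomp h g x).symm⟩

variable [CompactSpace X]

lemma tfae_exists_minimal {S : Set X} (hne : S.Nonempty) (hcl : IsClosed S)
    (hinv : ActInvariant T S) : ∃ M, M ⊆ S ∧ ActMinimal T M := by
  obtain ⟨M, hMS, hMmem, hMmin⟩ :=
    zorn_superset_nonempty {N : Set X | N.Nonempty ∧ IsClosed N ∧ ActInvariant T N}
      (fun c hcC hchain hcne => by
        refine ⟨⋂₀ c, ⟨?_, ?_, ?_⟩, fun s hs => Set.sInter_subset_of_mem hs⟩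
        · rw [Set.sInter_eq_iInter]
          have : Nonempty c := hcne.to_subtype
          apply IsCompact.nonempty_iInter_of_directed_nonempty_isCompact_isClosed
          · rintro ⟨i, hi⟩ ⟨j, hj⟩
            rcases eq_or_ne i j with rfl | hij
            · exact ⟨⟨i, hi⟩, subset_rfl, subset_rfl⟩
            · rcases hchain hi hj hij with h | h
              · exact ⟨⟨i, hi⟩, subset_rfl, h⟩
              · exact ⟨⟨j, hj⟩, h, subset_rfl⟩
          · exact fun i => (hcC i.2).1
          · exact fun i => (hcC i.2).2.1.isCompact
          · exact fun i => (hcC i.2).2.1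
        · exact isClosed_sInter fun N hN => (hcC hN).2.1
        · intro g x hx
          exact Set.mem_sInter.2 fun N hN => (hcC hN).2.2 g x (Set.mem_sInter.1 hx N hN))
      S ⟨hne, hcl, hinv⟩
  exact ⟨M, hMS, hMmem.1, hMmem.2.1, hMmem.2.2,
    fun N hNM hNne hNcl hNinv => subset_antisymm hNM (hMmin ⟨hNne, hNcl, hNinv⟩ hNM)⟩

lemma tfae_orbitClosure_eq (hcont : ∀ g : G, Continuous (T g))
    (hbij : ∀ g : G, Function.Bijective (T g))
    (hcomp : ∀ g h : G, T g ∘ T h = T (g + h))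
    {M : Set X} (hM : ActMinimal T M) {x : X} (hx : x ∈ M) :
    closure (Set.range fun g : G => T g x) = M := by
  have hsub : Set.range (fun g : G => T g x) ⊆ M := by
    rintro _ ⟨g, rfl⟩; exact hM.2.2.1 g x hx
  exact hM.2.2.2 _ (closure_minimal hsub hM.2.1)
    ⟨x, subset_closure ⟨0, tfae_tZero hbij hcomp x⟩⟩ isClosed_closure
    (tfae_closure_inv hcont (tfae_orbit_inv hcomp x))

lemma tfae_syndetic_meets (hcont : ∀ g : G, Continuous (T g))
    (hbij : ∀ g : G, Function.Bijective (T g))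
    (hcomp : ∀ g h : G, T g ∘ T h = T (g + h))
    {x₀ : X} (hx₀ : Dense (Set.range fun g : G => T g x₀))
    {K : Set X} (hKne : K.Nonempty) (hKcl : IsClosed K) (hKinv : ActInvariant T K)
    {U : Set X} (hsyn : SyndeticSet {g : G | T g x₀ ∈ U}) :
    ∃ z ∈ K, z ∈ closure U := by
  obtain ⟨F, hF, hFsyn⟩ := hsyn
  obtain ⟨y, hyK⟩ := hKne
  have hy : y ∈ closure (Set.range fun g : G => T g x₀) := hx₀ y
  have hcover : (Set.range fun g : G => T g x₀) ⊆ ⋃ f ∈ F, closure (T f '' U) := by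
    rintro _ ⟨g, rfl⟩
    obtain ⟨r, hr, f, hfF, rfl⟩ := hFsyn g
    exact Set.mem_biUnion hfF (subset_closure ⟨T r x₀, hr, by rw [tfae_tAdd hcomp, add_comm]⟩)
  have hclosed : IsClosed (⋃ f ∈ F, closure (T f '' U)) :=
    hF.isClosed_biUnion fun f _ => isClosed_closure
  obtain ⟨f, hfF, hyf⟩ := Set.mem_iUnion₂.1 (closure_minimal hcover hclosed hy)
  refine ⟨T (-f) y, hKinv _ _ hyK, ?_⟩
  have h1 : T (-f) y ∈ closure (T (-f) '' (T f '' U)) :=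
    image_closure_subset_closure_image (hcont _) ⟨y, hyf, rfl⟩
  rwa [← Set.image_comp, tfae_tNeg hbij hcomp, Set.image_id] at h1

lemma tfae_limitset [Infinite G] (hcont : ∀ g : G, Continuous (T g))
    (hcomp : ∀ g h : G, T g ∘ T h = T (g + h)) (y : X) :
    (⋂ A : Finset G, closure ((fun g : G => T g y) '' (↑A : Set G)ᶜ)).Nonempty ∧
    IsClosed (⋂ A : Finset G, closure ((fun g : G => T g y) '' (↑A : Set G)ᶜ)) ∧
    ActInvariant T (⋂ A : Finset G, closure ((fun g : G => T g y) '' (↑A : Set G)ᶜ)) := by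
  classical
  set Y : Finset G → Set X := fun A => closure ((fun g : G => T g y) '' (↑A : Set G)ᶜ) with hY
  have hmono : ∀ {A B : Finset G}, A ⊆ B → Y B ⊆ Y A := fun {A B} hAB =>
    closure_mono (Set.image_mono (Set.compl_subset_compl.2 (by exact_mod_cast hAB)))
  refine ⟨?_, isClosed_iInter fun A => isClosed_closure, ?_⟩
  · apply IsCompact.nonempty_iInter_of_directed_nonempty_isCompact_isClosed
    · exact fun A B => ⟨A ∪ B, hmono Finset.subset_union_left, hmono Finset.subset_union_right⟩
    · intro A
      obtain ⟨g, hg⟩ := (A.finite_toSet.infinite_compl).nonempty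
      exact ⟨T g y, subset_closure ⟨g, hg, rfl⟩⟩
    · exact fun A => isClosed_closure.isCompact
    · exact fun A => isClosed_closure
  · intro h x hx
    rw [Set.mem_iInter] at hx ⊢
    intro B
    have hxB : x ∈ Y (B.image fun b => -h + b) := hx _
    have h2 : T h '' ((fun g : G => T g y) '' (↑(B.image fun b => -h + b) : Set G)ᶜ) ⊆
        (fun g : G => T g y) '' (↑B : Set G)ᶜ := by
      rintro _ ⟨_, ⟨g, hg, rfl⟩, rfl⟩
      refine ⟨h + g, fun hmem => hg ?_, (tfae_tAdd hcomp h g y).symm⟩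
      exact Finset.mem_coe.2 (Finset.mem_image.2 ⟨h + g, Finset.mem_coe.1 hmem, by abel⟩)
    exact closure_mono h2 (image_closure_subset_closure_image (hcont h) ⟨x, hxB, rfl⟩)

end Helpers

/-- **Proposition.** Characterizations of essential minimality for an action of a
countably infinite abelian group on a compact metric space with a transitive point. -/
theorem essentially_minimal_tfae
    {G : Type*} [AddCommGroup G] [Countable G] [Infinite G]
    {X : Type*} [MetricSpace X] [CompactSpace X]
    (T : G → X → X)
    (hcont : ∀ g : G, Continuous (T g))
    (hbij : ∀ g : G, Function.Bijective (T g))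
    (hcomp : ∀ g h : G, T g ∘ T h = T (g + h))
    (x₀ : X) (hx₀ : Dense (Set.range fun g : G => T g x₀)) :
    List.TFAE
      [ ∃! M : Set X, ActMinimal T M,
        ∃ M' : Set X, M'.Nonempty ∧ IsClosed M' ∧ ActInvariant T M' ∧
          ∀ x ∈ M', ∀ y : X, ∃ gs : ℕ → G, TendstoInftyGrp gs ∧
            Tendsto (fun n => T (gs n) y) atTop (𝓝 x),
        ∃ xM : X, ∀ y : X, ∃ gs : ℕ → G, TendstoInftyGrp gs ∧
          Tendsto (fun n => T (gs n) y) atTop (𝓝 xM),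
        ∃ M'' : Set X, M''.Nonempty ∧ IsClosed M'' ∧ ActInvariant T M'' ∧
          ∀ U : Set X, IsOpen U → (U ∩ M'').Nonempty →
            SyndeticSet {g : G | T g x₀ ∈ U},
        ∃ U : ℕ → Set X, (∀ n, IsOpen (U n)) ∧ (∀ n, (U n).Nonempty) ∧
          Tendsto (fun n => Metric.diam (U n)) atTop (𝓝 0) ∧
          ∀ n, SyndeticSet {g : G | T g x₀ ∈ U n} ] := by
  classical
  tfae_have 1 → 2 := by
    rintro ⟨M, hM, huniq⟩
    refine ⟨M, hM.1, hM.2.1, hM.2.2.1, ?_⟩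
    intro x hx y
    obtain ⟨hLne, hLcl, hLinv⟩ := tfae_limitset (T := T) hcont hcomp y
    obtain ⟨N, hNL, hN⟩ := tfae_exists_minimal hLne hLcl hLinv
    have hxL : x ∈ ⋂ A : Finset G, closure ((fun g : G => T g y) '' (↑A : Set G)ᶜ) := by
      rw [huniq N hN] at hNL; exact hNL hx
    rw [Set.mem_iInter] at hxL
    obtain ⟨f, hfsurj⟩ := exists_surjective_nat G
    have hsel : ∀ n : ℕ, ∃ g : G, g ∉ (Finset.range (n + 1)).image f ∧
        dist x (T g y) < 1 / ((n : ℝ) + 1) := by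
      intro n
      have hx' := hxL ((Finset.range (n + 1)).image f)
      rw [Metric.mem_closure_iff] at hx'
      obtain ⟨b, ⟨g, hg, rfl⟩, hb⟩ := hx' (1 / ((n : ℝ) + 1)) (by positivity)
      exact ⟨g, by simpa using hg, hb⟩
    choose gs hgs1 hgs2 using hsel
    refine ⟨gs, ?_, ?_⟩
    · intro A hA
      choose inv hinv using hfsurj
      refine ⟨hA.toFinset.sup inv + 1, fun n hn hmem => hgs1 n ?_⟩
      have h1 : inv (gs n) ≤ hA.toFinset.sup inv :=
        Finset.le_sup (hA.mem_toFinset.2 hmem)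
      exact Finset.mem_image.2 ⟨inv (gs n), Finset.mem_range.2 (by omega), hinv _⟩
    · rw [tendsto_iff_dist_tendsto_zero]
      exact squeeze_zero (fun n => dist_nonneg)
        (fun n => (dist_comm (T (gs n) y) x ▸ (hgs2 n).le))
        tendsto_one_div_add_atTop_nhds_zero_nat
  tfae_have 2 → 3 := by
    rintro ⟨M', hne, -, -, hprop⟩
    obtain ⟨x, hx⟩ := hne
    exact ⟨x, hprop x hx⟩
  tfae_have 3 → 1 := by
    rintro ⟨xM, hxM⟩
    obtain ⟨M, -, hM⟩ := tfae_exists_minimal (T := T) (S := Set.univ) ⟨x₀, trivial⟩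
      isClosed_univ (fun _ _ _ => trivial)
    have key : ∀ K : Set X, ActMinimal T K → xM ∈ K := by
      intro K hK
      obtain ⟨y, hy⟩ := hK.1
      obtain ⟨gs, -, htend⟩ := hxM y
      exact hK.2.1.mem_of_tendsto htend (Eventually.of_forall fun n => hK.2.2.1 _ _ hy)
    refine ⟨M, hM, fun N hN => ?_⟩
    have hinv : ActInvariant T (N ∩ M) := fun g x hx =>
      ⟨hN.2.2.1 g x hx.1, hM.2.2.1 g x hx.2⟩
    have hne : (N ∩ M).Nonempty := ⟨xM, key N hN, key M hM⟩
    have h1 := hN.2.2.2 (N ∩ M) Set.inter_subset_left hne (hN.2.1.inter hM.2.1) hinv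
    have h2 := hM.2.2.2 (N ∩ M) Set.inter_subset_right hne (hN.2.1.inter hM.2.1) hinv
    rw [← h1, h2]
  tfae_have 1 → 4 := by
    rintro ⟨M, hM, huniq⟩
    refine ⟨M, hM.1, hM.2.1, hM.2.2.1, ?_⟩
    intro U hU hUM
    obtain ⟨u, huU, huM⟩ := hUM
    have hMsub : M ⊆ ⋃ g : G, T g ⁻¹' U := by
      intro x hx
      have horb : u ∈ closure (Set.range fun g : G => T g x) :=
        (tfae_orbitClosure_eq hcont hbij hcomp hM hx).symm ▸ huM
      obtain ⟨w, hwU, ⟨g, rfl⟩⟩ := (mem_closure_iff.1 horb) U hU huU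
      exact Set.mem_iUnion.2 ⟨g, hwU⟩
    obtain ⟨s, hs⟩ := hM.2.1.isCompact.elim_finite_subcover (fun g : G => T g ⁻¹' U)
      (fun g => hU.preimage (hcont g)) hMsub
    set V : Set X := ⋃ g ∈ s, T g ⁻¹' U with hV
    have hVopen : IsOpen V := isOpen_biUnion fun g _ => hU.preimage (hcont g)
    have hXsub : (Set.univ : Set X) ⊆ ⋃ h : G, T h ⁻¹' V := by
      intro y _
      obtain ⟨N, hNsub, hN⟩ := tfae_exists_minimal
        (S := closure (Set.range fun g : G => T g y))
        ⟨T 0 y, subset_closure ⟨0, rfl⟩⟩ isClosed_closure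
        (tfae_closure_inv hcont (tfae_orbit_inv hcomp y))
      rw [huniq N hN] at hNsub
      obtain ⟨m, hm⟩ := hM.1
      obtain ⟨w, hwV, ⟨h, rfl⟩⟩ := (mem_closure_iff.1 (hNsub hm)) V hVopen (hs hm)
      exact Set.mem_iUnion.2 ⟨h, hwV⟩
    obtain ⟨t, ht⟩ := isCompact_univ.elim_finite_subcover (fun h : G => T h ⁻¹' V)
      (fun h => hVopen.preimage (hcont h)) hXsub
    refine ⟨↑((s ×ˢ t).image fun p : G × G => -(p.1 + p.2)), Finset.finite_toSet _, ?_⟩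
    intro g
    obtain ⟨h, hht, hgV⟩ := Set.mem_iUnion₂.1 (ht (Set.mem_univ (T g x₀)))
    simp only [Set.mem_preimage] at hgV
    rw [tfae_tAdd hcomp] at hgV
    obtain ⟨f, hfs, hfU⟩ := Set.mem_iUnion₂.1 hgV
    simp only [Set.mem_preimage] at hfU
    rw [tfae_tAdd hcomp] at hfU
    refine ⟨f + (h + g), hfU, -(f + h), ?_, by abel⟩
    exact Finset.mem_coe.2 (Finset.mem_image.2 ⟨(f, h), Finset.mem_product.2 ⟨hfs, hht⟩, rfl⟩)
  tfae_have 4 → 5 := by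
    rintro ⟨M, hMne, -, -, hsyn⟩
    obtain ⟨x, hx⟩ := hMne
    refine ⟨fun n => Metric.ball x (1 / ((n : ℝ) + 1)), fun n => Metric.isOpen_ball,
      fun n => ⟨x, Metric.mem_ball_self (by positivity)⟩, ?_,
      fun n => hsyn _ Metric.isOpen_ball ⟨x, Metric.mem_ball_self (by positivity), hx⟩⟩
    apply squeeze_zero (fun n => Metric.diam_nonneg)
      (fun n => Metric.diam_ball (by positivity))
    have := tendsto_one_div_add_atTop_nhds_zero_nat.const_mul (2 : ℝ)
    simpa using this
  tfae_have 5 → 1 := by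
    rintro ⟨U, hUopen, hUne, hUdiam, hUsyn⟩
    obtain ⟨M, -, hM⟩ := tfae_exists_minimal (T := T) (S := Set.univ) ⟨x₀, trivial⟩
      isClosed_univ (fun _ _ _ => trivial)
    refine ⟨M, hM, fun N hN => ?_⟩
    choose p hpN hpU using fun n =>
      tfae_syndetic_meets hcont hbij hcomp hx₀ hN.1 hN.2.1 hN.2.2.1 (hUsyn n)
    choose q hqM hqU using fun n =>
      tfae_syndetic_meets hcont hbij hcomp hx₀ hM.1 hM.2.1 hM.2.2.1 (hUsyn n)
    obtain ⟨a, haN, φ, hφ, hpa⟩ := hN.2.1.isCompact.tendsto_subseq hpN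
    have hdist : ∀ n, dist (p n) (q n) ≤ Metric.diam (U n) := fun n => by
      rw [← Metric.diam_closure]
      exact Metric.dist_le_diam_of_mem
        Metric.isBounded_of_compactSpace
        (hpU n) (hqU n)
    have hqa : Tendsto (fun k => q (φ k)) atTop (𝓝 a) := by
      rw [tendsto_iff_dist_tendsto_zero]
      apply squeeze_zero (fun k => dist_nonneg)
        (fun k => (dist_triangle_left (q (φ k)) a (p (φ k))).trans
          (add_le_add_left (hdist (φ k)) _))
      have h1 : Tendsto (fun k => Metric.diam (U (φ k))) atTop (𝓝 0) :=
        hUdiam.comp hφ.tendsto_atTop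
      have h2 : Tendsto (fun k => dist (p (φ k)) a) atTop (𝓝 0) :=
        tendsto_iff_dist_tendsto_zero.1 hpa
      simpa using h1.add h2
    have haM : a ∈ M := hM.2.1.mem_of_tendsto hqa (Eventually.of_forall fun k => hqM _)
    have hinv : ActInvariant T (N ∩ M) := fun g x hx =>
      ⟨hN.2.2.1 g x hx.1, hM.2.2.1 g x hx.2⟩
    have hne : (N ∩ M).Nonempty := ⟨a, haN, haM⟩
    have h1 := hN.2.2.2 (N ∩ M) Set.inter_subset_left hne (hN.2.1.inter hM.2.1) hinv
    have h2 := hM.2.2.2 (N ∩ M) Set.inter_subset_right hne (hN.2.1.inter hM.2.1) hinv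
    rw [← h1, h2]
  tfae_finish
end
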